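/- arXiv:2012.01998 — 2 statements merged into one kernel-verified Lean document; each statement's English description precedes it below -/
import Mathlib

section
/- Let H be a finite-dimensional complex Hilbert space, |T⟩ ∈ H a unit vector, and M_0, …, M_{n-1} Kraus operators (∑_i M_i† M_i = I) satisfying M_i |T⟩ = z_i |T⟩ for complex numbers z_i. If the vectors M_0†|T⟩, …, M_{n-1}†|T⟩ do not span H, then there exists a nonzero vector |ψ⊥⟩ ∈ H such that ⟨ψ⊥|T⟩ = 0 and the pure state ρ = |ψ⊥⟩⟨ψ⊥|/⟨ψ⊥|ψ⊥⟩ satisfies F($(ρ), T) = F(ρ, T), where $(ρ) = ∑_i M_i ρ M_i† and F(ρ, T) = ⟨T|ρ|T⟩. -/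
open Matrix Complex ComplexOrder

lemma sum_mulVec' {d n : ℕ} (A : Fin n → Matrix (Fin d) (Fin d) ℂ) (v : Fin d → ℂ) :
    (∑ i, A i) *ᵥ v = ∑ i, A i *ᵥ v := by
  ext j
  simp [Matrix.mulVec, dotProduct, Finset.sum_apply, Finset.sum_mul, Matrix.sum_apply]
  rw [Finset.sum_comm]

lemma dotProduct_sum' {d n : ℕ} (w : Fin d → ℂ) (v : Fin n → Fin d → ℂ) :
    w ⬝ᵥ (∑ i, v i) = ∑ i, w ⬝ᵥ v i := by
  simp [dotProduct, Finset.sum_apply, Finset.mul_sum]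
  rw [Finset.sum_comm]

lemma vecMulVec_mulVec' {d : ℕ} (ψ v : Fin d → ℂ) :
    vecMulVec ψ (star ψ) *ᵥ v = (star ψ ⬝ᵥ v) • ψ := by
  ext i
  simp [mulVec, vecMulVec, dotProduct, Finset.sum_mul, Finset.mul_sum]
  congr 1; ext j; ring

/-- If the vectors `(M i)ᴴ *ᵥ T` do not span the space, then there is a nonzero vector `ψ`
orthogonal to the target `T` such that the pure state `ρ = |ψ⟩⟨ψ| / ⟨ψ|ψ⟩` has vanishing
fidelity increment under the channel `ρ ↦ ∑ i, M i * ρ * (M i)ᴴ`. -/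
theorem exists_orthogonal_state_with_zero_fidelity_increment {d n : ℕ}
    (M : Fin n → Matrix (Fin d) (Fin d) ℂ)
    (T : Fin d → ℂ) (hT : star T ⬝ᵥ T = 1)
    (hM : ∑ i, (M i)ᴴ * M i = 1)
    (z : Fin n → ℂ) (hz : ∀ i, M i *ᵥ T = z i • T)
    (hspan : Submodule.span ℂ (Set.range fun i => (M i)ᴴ *ᵥ T) ≠ ⊤) :
    ∃ ψ : Fin d → ℂ, ψ ≠ 0 ∧ star ψ ⬝ᵥ T = 0 ∧
      star T ⬝ᵥ ((∑ i, M i * ((star ψ ⬝ᵥ ψ)⁻¹ • vecMulVec ψ (star ψ)) * (M i)ᴴ) *ᵥ T) =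
        star T ⬝ᵥ (((star ψ ⬝ᵥ ψ)⁻¹ • vecMulVec ψ (star ψ)) *ᵥ T) := by
  -- transfer to EuclideanSpace
  set e : (Fin d → ℂ) ≃ₗ[ℂ] EuclideanSpace ℂ (Fin d) :=
    (WithLp.linearEquiv 2 ℂ (Fin d → ℂ)).symm with he
  set W : Submodule ℂ (EuclideanSpace ℂ (Fin d)) :=
    Submodule.span ℂ (Set.range fun i => e ((M i)ᴴ *ᵥ T)) with hW
  have hWtop : W ≠ ⊤ := by
    intro h
    apply hspan
    have : Submodule.span ℂ (Set.range fun i => e ((M i)ᴴ *ᵥ T)) =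
        (Submodule.span ℂ (Set.range fun i => (M i)ᴴ *ᵥ T)).map e.toLinearMap := by
      rw [Submodule.map_span]
      congr 1
      rw [← Set.range_comp]
      rfl
    rw [hW, this] at h
    have := congrArg (Submodule.map e.symm.toLinearMap) h
    rw [Submodule.map_top, LinearEquiv.range] at this
    rw [← this]
    ext x
    simp [Submodule.mem_map]
  have hbot : Wᗮ ≠ ⊥ := by
    intro h
    exact hWtop (Submodule.orthogonal_eq_bot_iff.mp h)
  obtain ⟨ψ', hψ'W, hψ'0⟩ := Submodule.exists_mem_ne_zero_of_ne_bot hbot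
  set ψ : Fin d → ℂ := e.symm ψ' with hψdef
  have horth : ∀ i, star ψ ⬝ᵥ ((M i)ᴴ *ᵥ T) = 0 := by
    intro i
    have := hψ'W (e ((M i)ᴴ *ᵥ T)) (Submodule.subset_span ⟨i, rfl⟩)
    have h2 : (∑ j, starRingEnd ℂ (((M i)ᴴ *ᵥ T) j) * ψ' j) = 0 := by
      simpa [PiLp.inner_apply, RCLike.inner_apply, he, mul_comm] using this
    have : starRingEnd ℂ (∑ j, starRingEnd ℂ (((M i)ᴴ *ᵥ T) j) * ψ' j) = 0 := by
      rw [h2]; simp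
    simpa [dotProduct, map_sum, mul_comm, hψdef, he] using this
  have hTspan : star ψ ⬝ᵥ T = 0 := by
    have key : star ψ ⬝ᵥ ((∑ i, (M i)ᴴ * M i) *ᵥ T) = 0 := by
      rw [sum_mulVec', dotProduct_sum']
      refine Finset.sum_eq_zero fun i _ => ?_
      rw [← Matrix.mulVec_mulVec, hz i, Matrix.mulVec_smul, dotProduct_smul, horth i,
        smul_zero]
    rw [hM] at key
    simpa using key
  refine ⟨ψ, ?_, hTspan, ?_⟩
  · intro h
    apply hψ'0
    have : e.symm ψ' = e.symm 0 := by simpa [hψdef] using h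
    exact e.symm.injective (by simpa [hψdef] using h)
  · have hRHS : star T ⬝ᵥ (((star ψ ⬝ᵥ ψ)⁻¹ • vecMulVec ψ (star ψ)) *ᵥ T) = 0 := by
      rw [Matrix.smul_mulVec, vecMulVec_mulVec', hTspan]
      simp
    rw [hRHS]
    rw [sum_mulVec', dotProduct_sum']
    refine Finset.sum_eq_zero fun i _ => ?_
    rw [Matrix.mul_assoc, ← Matrix.mulVec_mulVec, ← Matrix.mulVec_mulVec,
      Matrix.smul_mulVec, vecMulVec_mulVec', horth i]
    simp
end

section
/- Let S be the swap operator on ℂ^d ⊗ ℂ^d, let λ ∈ ℝ, let U = exp(−iλS), let |T⟩ ∈ ℂ^d be a unit vector, and define the channel $(ρ) = Tr_c[U (ρ ⊗ |T⟩_c⟨T|) U†]. Then for every density operator ρ on ℂ^d and every n ∈ ℕ, the target fidelity satisfies F($^n(ρ), T) = 1 − (1 − F(ρ, T)) cos^{2n}λ. In particular, if cos²λ < 1 then $^n(ρ) converges to |T⟩⟨T| as n → ∞. -/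
open scoped Nat
open Matrix Complex ComplexOrder NormedSpace Kronecker Filter

/-- The swap operator on `ℂ^d ⊗ ℂ^d`: `S (i,j) (k,l) = δ_{i,l} δ_{j,k}`, i.e.
`S = ∑_{i,j} |i⟩⟨j| ⊗ |j⟩⟨i|`. -/
def swapOp (d : ℕ) : Matrix (Fin d × Fin d) (Fin d × Fin d) ℂ :=
  Matrix.of fun p q => if p.1 = q.2 ∧ p.2 = q.1 then 1 else 0

/-- Partial trace over the controller (second) tensor factor. -/
noncomputable def ptraceControl {d : ℕ} (A : Matrix (Fin d × Fin d) (Fin d × Fin d) ℂ) :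
    Matrix (Fin d) (Fin d) ℂ :=
  Matrix.of fun i j => ∑ k, A (i, k) (j, k)


variable {d : ℕ}

lemma swap_mul_swap : swapOp d * swapOp d = 1 := by
  ext ⟨i, k⟩ ⟨j, l⟩
  simp [swapOp, Matrix.mul_apply, Fintype.sum_prod_type, Matrix.one_apply, ite_and,
    Prod.ext_iff, eq_comm]

lemma swap_conjT : (swapOp d)ᴴ = swapOp d := by
  ext ⟨i, k⟩ ⟨j, l⟩
  simp only [Matrix.conjTranspose_apply, swapOp, Matrix.of_apply, apply_ite (star : ℂ → ℂ),
    star_one, star_zero]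
  refine if_congr ?_ rfl rfl
  constructor <;> rintro ⟨a, b⟩ <;> exact ⟨b.symm, a.symm⟩

lemma pt1 (σ B : Matrix (Fin d) (Fin d) ℂ) :
    ptraceControl (σ ⊗ₖ B) = B.trace • σ := by
  ext i j
  simp [ptraceControl, Matrix.trace, Matrix.diag, Finset.mul_sum, mul_comm]

lemma pt2 (σ B : Matrix (Fin d) (Fin d) ℂ) :
    ptraceControl ((σ ⊗ₖ B) * swapOp d) = σ * B := by
  ext i j
  simp [ptraceControl, Matrix.mul_apply, swapOp, Fintype.sum_prod_type, ite_and]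

lemma pt3 (σ B : Matrix (Fin d) (Fin d) ℂ) :
    ptraceControl (swapOp d * (σ ⊗ₖ B)) = B * σ := by
  ext i j
  simp [ptraceControl, Matrix.mul_apply, swapOp, Fintype.sum_prod_type, ite_and,
    Finset.sum_comm (γ := Fin d), mul_comm]

lemma pt4 (σ B : Matrix (Fin d) (Fin d) ℂ) :
    ptraceControl (swapOp d * (σ ⊗ₖ B) * swapOp d) = σ.trace • B := by
  ext i j
  simp [ptraceControl, Matrix.mul_apply, swapOp, Fintype.sum_prod_type, ite_and,
    Matrix.trace, Matrix.diag]
  rw [Finset.sum_mul]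

lemma swap_pow_even (k : ℕ) : swapOp d ^ (2 * k) = 1 := by
  rw [pow_mul, sq, swap_mul_swap, one_pow]

lemma swap_pow_odd (k : ℕ) : swapOp d ^ (2 * k + 1) = swapOp d := by
  rw [pow_succ, swap_pow_even, one_mul]

set_option maxHeartbeats 1000000 in
lemma exp_swap (l : ℝ) :
    NormedSpace.exp ((-Complex.I * (l : ℂ)) • swapOp d) =
      (Real.cos l : ℂ) • (1 : Matrix (Fin d × Fin d) (Fin d × Fin d) ℂ)
        + (-(Complex.I * (Real.sin l : ℂ))) • swapOp d := by
  rw [exp_eq_tsum ℂ]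
  refine HasSum.tsum_eq ?_
  have hpow : ∀ n : ℕ, ((-Complex.I * (l : ℂ)) • swapOp d) ^ n
      = ((-Complex.I * (l : ℂ)) ^ n) • swapOp d ^ n := fun n => smul_pow _ _ _
  have hsq : (-Complex.I * (l : ℂ)) ^ 2 = -((l : ℂ) ^ 2) := by
    rw [mul_pow, neg_pow]
    simp [Complex.I_sq]
  have heven : HasSum (fun k : ℕ =>
      ((2 * k) !⁻¹ : ℂ) • ((-Complex.I * (l : ℂ)) • swapOp d) ^ (2 * k))
      ((Real.cos l : ℂ) • (1 : Matrix (Fin d × Fin d) (Fin d × Fin d) ℂ)) := by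
    have h := (Complex.hasSum_cos (l : ℂ)).smul_const
      (1 : Matrix (Fin d × Fin d) (Fin d × Fin d) ℂ)
    rw [← Complex.ofReal_cos] at h
    convert h using 2 with k
    rw [hpow, swap_pow_even, smul_smul]
    congr 1
    have hne : (((2 * k) ! : ℕ) : ℂ) ≠ 0 := Nat.cast_ne_zero.2 (Nat.factorial_ne_zero _)
    rw [pow_mul, hsq, neg_pow, ← pow_mul, div_eq_mul_inv]
    ring
  have hodd : HasSum (fun k : ℕ =>
      ((2 * k + 1) !⁻¹ : ℂ) • ((-Complex.I * (l : ℂ)) • swapOp d) ^ (2 * k + 1))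
      ((-(Complex.I * (Real.sin l : ℂ))) • swapOp d) := by
    have h := ((Complex.hasSum_sin (l : ℂ)).mul_left (-Complex.I)).smul_const (swapOp d)
    rw [← Complex.ofReal_sin] at h
    simp only [neg_mul] at h
    convert h using 2 with k
    rw [hpow, swap_pow_odd, smul_smul]
    congr 1
    have hne : (((2 * k + 1) ! : ℕ) : ℂ) ≠ 0 := Nat.cast_ne_zero.2 (Nat.factorial_ne_zero _)
    rw [pow_succ, pow_mul, hsq, neg_pow, ← pow_mul, div_eq_mul_inv]
    ring
  exact heven.even_add_odd hodd

lemma ptrace_add (A B : Matrix (Fin d × Fin d) (Fin d × Fin d) ℂ) :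
    ptraceControl (A + B) = ptraceControl A + ptraceControl B := by
  ext i j; simp [ptraceControl, Finset.sum_add_distrib]

lemma ptrace_smul (z : ℂ) (A : Matrix (Fin d × Fin d) (Fin d × Fin d) ℂ) :
    ptraceControl (z • A) = z • ptraceControl A := by
  ext i j; simp [ptraceControl, Finset.mul_sum]

section Pfacts
variable (T : Fin d → ℂ) (hT : star T ⬝ᵥ T = 1)

lemma trace_P (hT : star T ⬝ᵥ T = 1) : (vecMulVec T (star T)).trace = 1 := by
  rw [← hT]
  simp [Matrix.trace, Matrix.diag, vecMulVec_apply, dotProduct, mul_comm]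

lemma mulVec_P (v : Fin d → ℂ) :
    vecMulVec T (star T) *ᵥ v = (star T ⬝ᵥ v) • T := by
  ext i
  simp [Matrix.mulVec, vecMulVec_apply, dotProduct, Finset.mul_sum, mul_comm, mul_assoc,
    Finset.sum_mul]
  exact Finset.sum_congr rfl fun _ _ => by ring

lemma P_mul_P (hT : star T ⬝ᵥ T = 1) : vecMulVec T (star T) * vecMulVec T (star T) = vecMulVec T (star T) := by
  ext i j
  simp only [Matrix.mul_apply, vecMulVec_apply]
  have : ∑ k, T i * star T k * (T k * star T j)
      = (T i * star T j) * (star T ⬝ᵥ T) := by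
    rw [dotProduct, Finset.mul_sum]
    exact Finset.sum_congr rfl fun _ _ => by simp [Pi.star_apply]; ring
  rw [this, hT, mul_one]

lemma P_sig_P (σ : Matrix (Fin d) (Fin d) ℂ) :
    vecMulVec T (star T) * σ * vecMulVec T (star T)
      = (star T ⬝ᵥ (σ *ᵥ T)) • vecMulVec T (star T) := by
  ext i j
  simp only [Matrix.mul_apply, vecMulVec_apply, Matrix.smul_apply, smul_eq_mul,
    dotProduct, Matrix.mulVec, Pi.star_apply]
  simp only [Finset.sum_mul, Finset.mul_sum]
  rw [Finset.sum_comm]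
  exact Finset.sum_congr rfl fun a _ => Finset.sum_congr rfl fun b _ => by ring

lemma trace_sig_P (σ : Matrix (Fin d) (Fin d) ℂ) :
    (σ * vecMulVec T (star T)).trace = star T ⬝ᵥ (σ *ᵥ T) := by
  simp only [Matrix.trace, Matrix.diag, Matrix.mul_apply, vecMulVec_apply, dotProduct,
    Matrix.mulVec, Pi.star_apply]
  refine Finset.sum_congr rfl fun a _ => ?_
  rw [Finset.mul_sum]
  exact Finset.sum_congr rfl fun b _ => by ring

end Pfacts

lemma chan_eq (l : ℝ) (T : Fin d → ℂ) (hT : star T ⬝ᵥ T = 1)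
    (σ : Matrix (Fin d) (Fin d) ℂ) :
    ptraceControl ((NormedSpace.exp ((-Complex.I * (l : ℂ)) • swapOp d)) *
        (σ ⊗ₖ vecMulVec T (star T)) * (NormedSpace.exp ((-Complex.I * (l : ℂ)) • swapOp d))ᴴ)
      = ((Real.cos l : ℂ) ^ 2) • σ
        + ((Real.cos l : ℂ) * (Complex.I * (Real.sin l : ℂ))) • (σ * vecMulVec T (star T))
        + (-((Real.cos l : ℂ) * (Complex.I * (Real.sin l : ℂ)))) • (vecMulVec T (star T) * σ)
        + ((Real.sin l : ℂ) ^ 2) • (σ.trace • vecMulVec T (star T)) := by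
  rw [exp_swap]
  rw [conjTranspose_add, conjTranspose_smul, conjTranspose_smul, conjTranspose_one, swap_conjT]
  simp only [star_neg, star_mul', Complex.conj_I, RCLike.star_def, Complex.conj_ofReal,
    neg_mul, neg_neg, mul_neg]
  simp only [add_mul, mul_add, smul_add, smul_mul_assoc, mul_smul_comm, one_mul, mul_one,
    smul_smul]
  simp only [ptrace_add, ptrace_smul]
  rw [pt1, pt2, pt3, pt4, trace_P T hT]
  match_scalars <;> (try ring) <;> simp [Complex.I_sq] <;> ring

/-- **Example 2 (fidelity gain and convergence).** For the weak-swap channel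
`$(ρ) = Tr_c[exp(−iλS) (ρ ⊗ |T⟩⟨T|) exp(−iλS)ᴴ]` with unit target vector `T`, every density
operator `ρ` satisfies `F($ⁿ(ρ), T) = 1 − (1 − F(ρ, T)) cos^{2n}λ` for all `n`; in particular,
if `cos²λ < 1` then the iterates `$ⁿ(ρ)` converge to `|T⟩⟨T|`. -/
theorem weak_swap_fidelity_and_convergence {d : ℕ} (l : ℝ)
    (T : Fin d → ℂ) (hT : star T ⬝ᵥ T = 1)
    (ρ : Matrix (Fin d) (Fin d) ℂ) (hρ : ρ.PosSemidef) (hρtr : ρ.trace = 1) :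
    let U : Matrix (Fin d × Fin d) (Fin d × Fin d) ℂ :=
      NormedSpace.exp ((-Complex.I * (l : ℂ)) • swapOp d)
    let chan : Matrix (Fin d) (Fin d) ℂ → Matrix (Fin d) (Fin d) ℂ :=
      fun σ => ptraceControl (U * (σ ⊗ₖ vecMulVec T (star T)) * Uᴴ)
    (∀ n : ℕ, star T ⬝ᵥ (chan^[n] ρ *ᵥ T) =
      1 - (1 - star T ⬝ᵥ (ρ *ᵥ T)) * ((Real.cos l : ℂ)) ^ (2 * n)) ∧
    (Real.cos l ^ 2 < 1 →
      Tendsto (fun n => chan^[n] ρ) atTop (nhds (vecMulVec T (star T)))) := by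
  intro U chan
  set c : ℂ := (Real.cos l : ℂ) with hc
  set s : ℂ := (Real.sin l : ℂ) with hs
  set P : Matrix (Fin d) (Fin d) ℂ := vecMulVec T (star T) with hPdef
  have hchan : ∀ σ : Matrix (Fin d) (Fin d) ℂ, chan σ =
      (c ^ 2) • σ + (c * (Complex.I * s)) • (σ * P) + (-(c * (Complex.I * s))) • (P * σ)
        + (s ^ 2) • (σ.trace • P) := fun σ => chan_eq l T hT σ
  have hcs : c ^ 2 + s ^ 2 = 1 := by
    rw [hc, hs]
    norm_cast
    exact Real.cos_sq_add_sin_sq l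
  have hPT : P *ᵥ T = T := by rw [hPdef, mulVec_P, hT, one_smul]
  have hdotP : ∀ v, star T ⬝ᵥ (P *ᵥ v) = star T ⬝ᵥ v := by
    intro v
    rw [hPdef, mulVec_P, dotProduct_smul, hT, smul_eq_mul, mul_one]
  have hPP : P * P = P := P_mul_P T hT
  have htrP : P.trace = 1 := trace_P T hT
  -- fidelity and trace of chan
  have hfid : ∀ σ : Matrix (Fin d) (Fin d) ℂ, star T ⬝ᵥ (chan σ *ᵥ T) =
      c ^ 2 * (star T ⬝ᵥ (σ *ᵥ T)) + s ^ 2 * σ.trace := by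
    intro σ
    rw [hchan]
    simp only [add_mulVec, smul_mulVec, dotProduct_add, dotProduct_smul, smul_eq_mul]
    rw [← mulVec_mulVec, ← mulVec_mulVec, hPT, hdotP, hT]
    ring
  have htr : ∀ σ : Matrix (Fin d) (Fin d) ℂ, (chan σ).trace = σ.trace := by
    intro σ
    rw [hchan]
    simp only [trace_add, trace_smul, smul_eq_mul]
    rw [trace_mul_comm P σ, hPdef, trace_sig_P, trace_P T hT, mul_one]
    linear_combination σ.trace * hcs
  set f : ℂ := star T ⬝ᵥ (ρ *ᵥ T) with hf
  have key : ∀ n : ℕ, (chan^[n] ρ).trace = 1 ∧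
      star T ⬝ᵥ (chan^[n] ρ *ᵥ T) = 1 - (1 - f) * c ^ (2 * n) := by
    intro n
    induction n with
    | zero =>
      refine ⟨hρtr, ?_⟩
      rw [Function.iterate_zero_apply, ← hf]
      norm_num
    | succ n ih =>
      refine ⟨?_, ?_⟩
      · rw [Function.iterate_succ_apply', htr, ih.1]
      · rw [Function.iterate_succ_apply', hfid, ih.1, ih.2]
        have hs2 : s ^ 2 = 1 - c ^ 2 := by linear_combination hcs
        rw [hs2]
        ring
  refine ⟨fun n => (key n).2, ?_⟩
  -- convergence
  intro hcos
  set W : Matrix (Fin d) (Fin d) ℂ := ρ - P * ρ - ρ * P + (2 * f - 1) • P with hW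
  set Y : Matrix (Fin d) (Fin d) ℂ := P * ρ - f • P with hY
  set Z : Matrix (Fin d) (Fin d) ℂ := ρ * P - f • P with hZ
  set β : ℂ := c ^ 2 - c * (Complex.I * s) with hβ
  set γ : ℂ := c ^ 2 + c * (Complex.I * s) with hγ
  have hPρP : P * ρ * P = f • P := P_sig_P T ρ
  have htrPρ : (P * ρ).trace = f := by rw [trace_mul_comm, hPdef, trace_sig_P, ← hf]
  have htrρP : (ρ * P).trace = f := by rw [hPdef, trace_sig_P, ← hf]
  -- eigen relations
  have hchanP : chan P = P := by
    rw [hchan, hPP, htrP, one_smul]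
    match_scalars <;> linear_combination hcs
  have hchanW : chan W = c ^ 2 • W := by
    have h1 : W * P = (f - 1) • P := by
      rw [hW, add_mul, sub_mul, sub_mul, smul_mul_assoc, hPρP, mul_assoc, hPP]
      module
    have h2 : P * W = (f - 1) • P := by
      rw [hW, mul_add, mul_sub, mul_sub, mul_smul_comm, ← mul_assoc, ← mul_assoc, hPP, hPρP]
      module
    have h3 : W.trace = 0 := by
      rw [hW, trace_add, trace_sub, trace_sub, trace_smul, htrPρ, htrρP, hρtr, htrP]
      simp
      ring
    rw [hchan, h1, h2, h3, zero_smul, smul_zero]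
    module
  have hchanY : chan Y = β • Y := by
    have h1 : Y * P = 0 := by
      rw [hY, sub_mul, smul_mul_assoc, hPρP, hPP, sub_self]
    have h2 : P * Y = Y := by
      rw [hY, mul_sub, mul_smul_comm, ← mul_assoc, hPP]
    have h3 : Y.trace = 0 := by
      rw [hY, trace_sub, trace_smul, htrPρ, htrP]
      simp
    rw [hchan, h1, h2, h3, zero_smul, smul_zero, smul_zero, hβ]
    module
  have hchanZ : chan Z = γ • Z := by
    have h1 : Z * P = Z := by
      rw [hZ, sub_mul, smul_mul_assoc, mul_assoc, hPP]
    have h2 : P * Z = 0 := by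
      rw [hZ, mul_sub, mul_smul_comm, ← mul_assoc, hPρP, hPP, sub_self]
    have h3 : Z.trace = 0 := by
      rw [hZ, trace_sub, trace_smul, htrρP, htrP]
      simp
    rw [hchan, h1, h2, h3, zero_smul, smul_zero, smul_zero, hγ]
    module
  -- linearity of chan
  have hadd : ∀ A B : Matrix (Fin d) (Fin d) ℂ, chan (A + B) = chan A + chan B := by
    intro A B
    rw [hchan, hchan, hchan, trace_add, add_mul, mul_add]
    module
  have hsmul : ∀ (z : ℂ) (A : Matrix (Fin d) (Fin d) ℂ), chan (z • A) = z • chan A := by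
    intro z A
    rw [hchan, hchan, trace_smul, smul_eq_mul, smul_mul_assoc, mul_smul_comm]
    module
  have hclosed : ∀ n : ℕ, chan^[n] ρ =
      P + ((c ^ 2) ^ n) • W + (β ^ n) • Y + (γ ^ n) • Z := by
    intro n
    induction n with
    | zero =>
      simp only [Function.iterate_zero_apply, pow_zero, one_smul, hW, hY, hZ]
      module
    | succ n ih =>
      rw [Function.iterate_succ_apply', ih, hadd, hadd, hadd, hsmul, hsmul, hsmul,
        hchanP, hchanW, hchanY, hchanZ, pow_succ, pow_succ, pow_succ]
      module
  -- norms
  have hnc : ‖c‖ < 1 := by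
    rw [hc, Complex.norm_real, Real.norm_eq_abs]
    exact (sq_lt_one_iff_abs_lt_one _).mp hcos
  have hβγnorm : ‖(c - Complex.I * s : ℂ)‖ = 1 ∧ ‖(c + Complex.I * s : ℂ)‖ = 1 := by
    have hexp : (c + Complex.I * s : ℂ) = Complex.exp ((l : ℂ) * Complex.I) := by
      rw [Complex.exp_mul_I, ← Complex.ofReal_cos, ← Complex.ofReal_sin, hc, hs]
      ring
    have h2 : ‖(c + Complex.I * s : ℂ)‖ = 1 := by
      rw [hexp, Complex.norm_exp_ofReal_mul_I]
    have hconj : (c - Complex.I * s : ℂ) = (starRingEnd ℂ) (c + Complex.I * s) := by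
      rw [map_add, _root_.map_mul, Complex.conj_I, hc, hs, Complex.conj_ofReal,
        Complex.conj_ofReal]
      ring
    refine ⟨?_, h2⟩
    rw [hconj, RCLike.norm_conj, h2]
  have hn1 : ‖(c ^ 2 : ℂ)‖ < 1 := by
    rw [norm_pow]
    nlinarith [norm_nonneg (c : ℂ)]
  have hn2 : ‖β‖ < 1 := by
    have : β = c * (c - Complex.I * s) := by rw [hβ]; ring
    rw [this, norm_mul, hβγnorm.1, mul_one]
    exact hnc
  have hn3 : ‖γ‖ < 1 := by
    have : γ = c * (c + Complex.I * s) := by rw [hγ]; ring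
    rw [this, norm_mul, hβγnorm.2, mul_one]
    exact hnc
  have t1 := (tendsto_pow_atTop_nhds_zero_of_norm_lt_one hn1).smul_const W
  have t2 := (tendsto_pow_atTop_nhds_zero_of_norm_lt_one hn2).smul_const Y
  have t3 := (tendsto_pow_atTop_nhds_zero_of_norm_lt_one hn3).smul_const Z
  rw [zero_smul] at t1 t2 t3
  have := (((tendsto_const_nhds (x := P) (f := atTop)).add t1).add t2).add t3
  simp only [add_zero] at this
  refine Tendsto.congr (fun n => (hclosed n).symm) ?_
  exact this
end
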